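/- arXiv:2505.03937 — 2 statements merged into one kernel-verified Lean document; each statement's English description precedes it below -/
import Mathlib

section
/- In the compounding carryover model Y_{t2} = β₀ + β₁^{1 + γ Z_{t1}} Z_{t2} + β₂ X + ε with Z_{t2} = 1 − Z_{t1} (counterbalanced), conditional on balanced covariates (E[X | Z_{t2}=1] = E[X | Z_{t2}=0]) and E[ε | Z_{t1}, Z_{t2}, X] = 0, the difference in means E[Y_{t2} | Z_{t2}=1] − E[Y_{t2} | Z_{t2}=0] equals β₁ (not β₁^{1+γ}), since Z_{t2}=1 implies Z_{t1}=0; hence the naive estimand recovers the unexposed-effect β₁ regardless of γ. -/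
open MeasureTheory ProbabilityTheory

lemma cond_integral_aux {Ω : Type*} [mΩ : MeasurableSpace Ω]
    (μ : Measure Ω) [IsProbabilityMeasure μ]
    (m' : MeasurableSpace Ω) (hm' : m' ≤ mΩ)
    (X ε Yt2 : Ω → ℝ)
    (hintX : Integrable X μ) (hintε : Integrable ε μ)
    (hε : μ[ε|m'] =ᵐ[μ] 0)
    (s : Set Ω) (hsm' : MeasurableSet[m'] s) (hs0 : μ s ≠ 0)
    (v b2 : ℝ) (hYs : ∀ ω ∈ s, Yt2 ω = v + b2 * X ω + ε ω) :
    ∫ ω, Yt2 ω ∂(μ[|s]) = v + b2 * ∫ ω, X ω ∂(μ[|s]) := by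
  have hs : MeasurableSet[mΩ] s := hm' s hsm'
  have hinvfin : (μ s)⁻¹ ≠ ⊤ := ENNReal.inv_ne_top.mpr hs0
  have hconddef : μ[|s] = (μ s)⁻¹ • μ.restrict s := rfl
  have hXc : Integrable X (μ[|s]) := by
    rw [hconddef]; exact (hintX.restrict).smul_measure hinvfin
  have hεc : Integrable ε (μ[|s]) := by
    rw [hconddef]; exact (hintε.restrict).smul_measure hinvfin
  have hprob : IsProbabilityMeasure (μ[|s]) := cond_isProbabilityMeasure hs0
  have hεzero : ∫ ω, ε ω ∂(μ[|s]) = 0 := by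
    rw [hconddef, integral_smul_measure]
    have h1 : ∫ ω in s, ε ω ∂μ = 0 := by
      rw [← setIntegral_condExp hm' hintε hsm']
      rw [integral_congr_ae (ae_restrict_of_ae hε)]
      simp
    rw [h1]; simp
  have hae : ∀ᵐ ω ∂(μ[|s]), Yt2 ω = v + b2 * X ω + ε ω := by
    rw [hconddef]
    refine Measure.ae_smul_measure ?_ _
    filter_upwards [ae_restrict_mem hs] with ω hω using hYs ω hω
  rw [integral_congr_ae hae]
  have hIc : Integrable (fun ω => v + b2 * X ω) (μ[|s]) :=
    (integrable_const v).add (hXc.const_mul b2)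
  rw [integral_add hIc hεc, hεzero,
    integral_add (integrable_const v) (hXc.const_mul b2),
    integral_const, integral_const_mul]
  simp

/-- In the compounding carryover model
Y_{t2} = β₀ + β₁^{1+γZ_{t1}} Z_{t2} + β₂X + ε with Z_{t2} = 1 − Z_{t1} and β₁ > 0,
if covariates are balanced and E[ε|Z_{t1},Z_{t2},X] = 0, then
E[Y_{t2}|Z_{t2}=1] − E[Y_{t2}|Z_{t2}=0] = β₁ (not β₁^{1+γ}), since Z_{t2}=1
implies Z_{t1}=0. -/
theorem compounding_carryover_naive {Ω : Type*} [mΩ : MeasurableSpace Ω]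
    (μ : Measure Ω) [IsProbabilityMeasure μ]
    (m' : MeasurableSpace Ω) (hm' : m' ≤ mΩ)
    (Zt1 Zt2 X ε : Ω → ℝ)
    (hZ : ∀ ω, Zt1 ω = 0 ∨ Zt1 ω = 1) (hcb : ∀ ω, Zt2 ω = 1 - Zt1 ω)
    (hZ1m : Measurable[m'] Zt1) (hZ2m : Measurable[m'] Zt2)
    (hXm : Measurable[m'] X)
    (hintX : Integrable X μ) (hintε : Integrable ε μ)
    (hε : μ[ε|m'] =ᵐ[μ] 0)
    (β0 β1 β2 γ : ℝ) (hβ1 : 0 < β1)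
    (Yt2 : Ω → ℝ)
    (hY : ∀ ω, Yt2 ω = β0 + β1 ^ (1 + γ * Zt1 ω) * Zt2 ω + β2 * X ω + ε ω)
    (hbal : ∫ ω, X ω ∂(μ[|{ω | Zt2 ω = 1}]) = ∫ ω, X ω ∂(μ[|{ω | Zt2 ω = 0}]))
    (hpos1 : 0 < μ {ω | Zt2 ω = 1}) (hpos0 : 0 < μ {ω | Zt2 ω = 0}) :
    (∫ ω, Yt2 ω ∂(μ[|{ω | Zt2 ω = 1}]))
      - ∫ ω, Yt2 ω ∂(μ[|{ω | Zt2 ω = 0}]) = β1 := by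
  have hs1m : MeasurableSet[m'] {ω | Zt2 ω = 1} := hZ2m (measurableSet_singleton 1)
  have hs0m : MeasurableSet[m'] {ω | Zt2 ω = 0} := hZ2m (measurableSet_singleton 0)
  have h1 : ∫ ω, Yt2 ω ∂(μ[|{ω | Zt2 ω = 1}])
      = (β0 + β1) + β2 * ∫ ω, X ω ∂(μ[|{ω | Zt2 ω = 1}]) := by
    refine cond_integral_aux (mΩ := mΩ) μ m' hm' X ε Yt2 hintX hintε hε _ hs1m hpos1.ne' _ _ ?_
    intro ω hω
    have hz2 : Zt2 ω = 1 := hω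
    have hz1 : Zt1 ω = 0 := by have := hcb ω; rw [hz2] at this; linarith
    rw [hY ω, hz1, hz2]
    norm_num
  have h0 : ∫ ω, Yt2 ω ∂(μ[|{ω | Zt2 ω = 0}])
      = β0 + β2 * ∫ ω, X ω ∂(μ[|{ω | Zt2 ω = 0}]) := by
    refine cond_integral_aux (mΩ := mΩ) μ m' hm' X ε Yt2 hintX hintε hε _ hs0m hpos0.ne' _ _ ?_
    intro ω hω
    have hz2 : Zt2 ω = 0 := hω
    rw [hY ω, hz2]
    ring
  rw [h1, h0, hbal]
  ring
end

section
/- Suppose all carryover is mediated by the covariate: Y_{t2} = τ Z_{t2} + X_{t2} + ε with X_{t2} = X_{t1} + γ Z_{t1}, E[ε]=0, ε ⫫ (Z_{t1},Z_{t2},X_{t1}), and X_{t1} ⫫ (Z_{t1},Z_{t2}). If Z_{t2} = 1 − Z_{t1} (counterbalanced) with P(Z_{t1}=1)=p ∈ (0,1), then the unadjusted difference in means satisfies E[Y_{t2} | Z_{t2}=1] − E[Y_{t2} | Z_{t2}=0] = τ − γ, which differs from τ whenever γ ≠ 0. -/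
open MeasureTheory ProbabilityTheory

lemma indep_setIntegral {Ω : Type*} [MeasurableSpace Ω] {μ : Measure Ω} [IsProbabilityMeasure μ]
    {X Z : Ω → ℝ} (hX : Integrable X μ) (hZ : Measurable Z) (h : IndepFun X Z μ) (c : ℝ) :
    ∫ ω in {ω | Z ω = c}, X ω ∂μ = (μ {ω | Z ω = c}).toReal * ∫ ω, X ω ∂μ := by
  have hs : MeasurableSet {ω | Z ω = c} := hZ (measurableSet_singleton c)
  set ι : ℝ → ℝ := Set.indicator ({c} : Set ℝ) 1 with hι
  have hιm : Measurable ι := measurable_one.indicator (measurableSet_singleton c)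
  have hind : IndepFun X (ι ∘ Z) μ := h.comp measurable_id hιm
  have hcomp : (ι ∘ Z) = Set.indicator {ω | Z ω = c} 1 := by
    ext ω
    by_cases hω : Z ω = c <;> simp [hι, Set.indicator, hω, Set.mem_setOf_eq]
  have hmul : (fun ω => X ω * (ι ∘ Z) ω) = Set.indicator {ω | Z ω = c} X := by
    ext ω
    by_cases hω : Z ω = c <;> simp [hι, Set.indicator, hω, Set.mem_setOf_eq]
  have hintι : Integrable (ι ∘ Z) μ := by
    rw [hcomp]
    exact (integrable_const (1:ℝ)).indicator hs
  have := hind.integral_mul_eq_mul_integral hX.aestronglyMeasurable hintι.aestronglyMeasurable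
  rw [show (X * (ι ∘ Z)) = (fun ω => X ω * (ι ∘ Z) ω) from rfl, hmul,
    integral_indicator hs, hcomp, integral_indicator_one hs] at this
  rw [this, mul_comm, Measure.real]


/-- With carryover mediated entirely by the covariate
(X_{t2} = X_{t1} + γ Z_{t1}), a counterbalanced design (Z_{t2} = 1 − Z_{t1}) with
P(Z_{t1}=1) = p ∈ (0,1) yields an unadjusted difference in means
E[Y_{t2}|Z_{t2}=1] − E[Y_{t2}|Z_{t2}=0] = τ − γ, which differs from τ when γ ≠ 0. -/
theorem cwsd_covariate_mediated_bias {Ω : Type*} [mΩ : MeasurableSpace Ω]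
    (μ : Measure Ω) [IsProbabilityMeasure μ]
    (Zt1 Xt1 ε : Ω → ℝ)
    (hZ : ∀ ω, Zt1 ω = 0 ∨ Zt1 ω = 1) (hZmeas : Measurable Zt1)
    (p : ℝ) (hp0 : 0 < p) (hp1 : p < 1)
    (hp : μ {ω | Zt1 ω = 1} = ENNReal.ofReal p)
    (Zt2 : Ω → ℝ) (hcb : ∀ ω, Zt2 ω = 1 - Zt1 ω)
    (γ τ : ℝ)
    (Xt2 : Ω → ℝ) (hX2 : ∀ ω, Xt2 ω = Xt1 ω + γ * Zt1 ω)
    (hintX : Integrable Xt1 μ) (hintε : Integrable ε μ)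
    (hε0 : ∫ ω, ε ω ∂μ = 0)
    (hεindep : IndepFun ε (fun ω => (Zt1 ω, Zt2 ω, Xt1 ω)) μ)
    (hXindep : IndepFun Xt1 (fun ω => (Zt1 ω, Zt2 ω)) μ)
    (Yt2 : Ω → ℝ) (hY : ∀ ω, Yt2 ω = τ * Zt2 ω + Xt2 ω + ε ω) :
    (∫ ω, Yt2 ω ∂(μ[|{ω | Zt2 ω = 1}]))
        - (∫ ω, Yt2 ω ∂(μ[|{ω | Zt2 ω = 0}])) = τ - γ ∧
      (γ ≠ 0 →
        (∫ ω, Yt2 ω ∂(μ[|{ω | Zt2 ω = 1}]))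
          - (∫ ω, Yt2 ω ∂(μ[|{ω | Zt2 ω = 0}])) ≠ τ) := by
  set s1 : Set Ω := {ω | Zt1 ω = 1} with hs1def
  set s0 : Set Ω := {ω | Zt1 ω = 0} with hs0def
  have hms1 : MeasurableSet s1 := hZmeas (measurableSet_singleton 1)
  have hms0 : MeasurableSet s0 := hZmeas (measurableSet_singleton 0)
  have hset1 : {ω | Zt2 ω = 1} = s0 := by
    ext ω; simp only [Set.mem_setOf_eq, hs0def, hcb ω]
    constructor <;> intro h <;> linarith
  have hset0 : {ω | Zt2 ω = 0} = s1 := by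
    ext ω; simp only [Set.mem_setOf_eq, hs1def, hcb ω]
    constructor <;> intro h <;> linarith
  have hs0c : s0 = s1ᶜ := by
    ext ω; simp only [Set.mem_compl_iff, Set.mem_setOf_eq, hs0def, hs1def]
    rcases hZ ω with h | h <;> simp [h]
  have hq1 : (μ s1).toReal = p := by
    rw [hp, ENNReal.toReal_ofReal hp0.le]
  have hq0 : (μ s0).toReal = 1 - p := by
    rw [hs0c, prob_compl_eq_one_sub hms1, hp,
      ENNReal.toReal_sub_of_le (by simpa using ENNReal.ofReal_le_one.2 hp1.le) ENNReal.one_ne_top]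
    simp [ENNReal.toReal_ofReal hp0.le]
  have hXZ1 : IndepFun Xt1 Zt1 μ := hXindep.comp measurable_id measurable_fst
  have hεZ1 : IndepFun ε Zt1 μ := hεindep.comp measurable_id measurable_fst
  set EX := ∫ ω, Xt1 ω ∂μ with hEX
  have I0X : ∫ ω in s0, Xt1 ω ∂μ = (1 - p) * EX := by
    rw [hs0def, indep_setIntegral hintX hZmeas hXZ1 0, ← hs0def, hq0]
  have I1X : ∫ ω in s1, Xt1 ω ∂μ = p * EX := by
    rw [hs1def, indep_setIntegral hintX hZmeas hXZ1 1, ← hs1def, hq1]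
  have I0ε : ∫ ω in s0, ε ω ∂μ = 0 := by
    rw [hs0def, indep_setIntegral hintε hZmeas hεZ1 0, hε0, mul_zero]
  have I1ε : ∫ ω in s1, ε ω ∂μ = 0 := by
    rw [hs1def, indep_setIntegral hintε hZmeas hεZ1 1, hε0, mul_zero]
  -- integral over s0
  have hY0 : ∫ ω in s0, Yt2 ω ∂μ = (1 - p) * τ + (1 - p) * EX := by
    have heq : Set.EqOn Yt2 (fun ω => τ + (Xt1 ω + ε ω)) s0 := by
      intro ω hω
      have h0 : Zt1 ω = 0 := hω
      simp [hY ω, hcb ω, hX2 ω, h0]; ring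
    have hadd0 : IntegrableOn (fun ω => Xt1 ω + ε ω) s0 μ := by
      exact hintX.integrableOn.add hintε.integrableOn
    rw [setIntegral_congr_fun hms0 heq,
      integral_add (integrableOn_const (C := τ) (measure_ne_top μ s0)) hadd0,
      integral_add hintX.integrableOn hintε.integrableOn,
      setIntegral_const, I0X, I0ε, smul_eq_mul, Measure.real, hq0]
    ring
  have hY1 : ∫ ω in s1, Yt2 ω ∂μ = p * γ + p * EX := by
    have heq : Set.EqOn Yt2 (fun ω => γ + (Xt1 ω + ε ω)) s1 := by
      intro ω hω
      have h1 : Zt1 ω = 1 := hω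
      simp [hY ω, hcb ω, hX2 ω, h1]; ring
    have hadd1 : IntegrableOn (fun ω => Xt1 ω + ε ω) s1 μ := by
      exact hintX.integrableOn.add hintε.integrableOn
    rw [setIntegral_congr_fun hms1 heq,
      integral_add (integrableOn_const (C := γ) (measure_ne_top μ s1)) hadd1,
      integral_add hintX.integrableOn hintε.integrableOn,
      setIntegral_const, I1X, I1ε, smul_eq_mul, Measure.real, hq1]
    ring
  have hc0 : ∫ ω, Yt2 ω ∂(μ[|{ω | Zt2 ω = 1}]) = τ + EX := by
    rw [hset1, ProbabilityTheory.cond, integral_smul_measure, hY0, ENNReal.toReal_inv, hq0, smul_eq_mul]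
    have hne : (1:ℝ) - p ≠ 0 := by linarith
    field_simp
  have hc1 : ∫ ω, Yt2 ω ∂(μ[|{ω | Zt2 ω = 0}]) = γ + EX := by
    rw [hset0, ProbabilityTheory.cond, integral_smul_measure, hY1, ENNReal.toReal_inv, hq1, smul_eq_mul]
    have hne : p ≠ 0 := ne_of_gt hp0
    field_simp
  rw [hc0, hc1]
  constructor
  · ring
  · intro hγ; intro h; apply hγ; linarith
end
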